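/- Let Γ be a countably infinite group with a proper right-invariant metric d. Every extendable Γ-ideal with the join property is reducible to a local extendable Γ-ideal: if P is an extendable Γ-ideal with the join property, then there exist a local extendable Γ-ideal P' and a map ρ : ℕ → ℕ such that ρ ∘ φ ∈ P for every φ ∈ P'. -/

import Mathlib

open Set Function Topology

namespace DescColor

/-- A set is *Baire measurable* if it differs from an open set by a meager set. -/
def BaireMSet {X : Type*} [TopologicalSpace X] (S : Set X) : Prop :=
  ∃ U : Set X, IsOpen U ∧ IsMeagre (symmDiff S U)

/-- A function is *Baire measurable* if preimages of measurable (Borel) sets are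
Baire measurable. -/
def BaireMFun {X Y : Type*} [TopologicalSpace X] [MeasurableSpace Y] (f : X → Y) : Prop :=
  ∀ B : Set Y, MeasurableSet B → BaireMSet (f ⁻¹' B)

variable {Γ : Type*}

/-- The shift action of `Γ` on colorings `Γ → ℕ`: `(γ · ω)(δ) = ω (δ γ)`. -/
def shift [Group Γ] (γ : Γ) (ω : Γ → ℕ) : Γ → ℕ := fun δ => ω (δ * γ)

/-- A subshift: a closed shift-invariant set of colorings. -/
def IsSubshift [Group Γ] (Ω : Set (Γ → ℕ)) : Prop :=
  IsClosed Ω ∧ ∀ (γ : Γ), ∀ ω ∈ Ω, shift γ ω ∈ Ω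

/-- The coding map `π_f(x)(γ) = f (γ • x)`. -/
def codingMap [Group Γ] {X : Type*} [MulAction Γ X] (f : X → ℕ) (x : X) : Γ → ℕ :=
  fun γ => f (γ • x)

/-- The action of `Γ` on `X` admits a Baire measurable `Ω`-coloring. -/
def HasBMColoring [Group Γ] (X : Type*) [TopologicalSpace X] [MulAction Γ X]
    (Ω : Set (Γ → ℕ)) : Prop :=
  ∃ f : X → ℕ, BaireMFun f ∧ {x : X | codingMap f x ∈ Ω} ∈ residual X

/-- The action of `Γ` on `X` is generically smooth. -/
def GenSmooth (Γ : Type*) [Group Γ] (X : Type*) [TopologicalSpace X] [MulAction Γ X] : Prop :=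
  ∃ f : X → ℝ, BaireMFun f ∧ ∀ x y : X, f x = f y ↔ ∃ γ : Γ, γ • x = y

/-- The shift action of `Γ` on `ℕ^Γ` admits a Baire measurable `Ω`-coloring. -/
def ShiftHasBMColoring (Γ : Type*) [Group Γ] (Ω : Set (Γ → ℕ)) : Prop :=
  ∃ f : (Γ → ℕ) → ℕ, BaireMFun f ∧
    {ω : Γ → ℕ | (fun γ : Γ => f (shift γ ω)) ∈ Ω} ∈ residual (Γ → ℕ)

/-- A free continuous action of `Γ` on a Polish space. -/
structure FreePolishAction (Γ : Type*) [Group Γ] where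
  X : Type
  ts : TopologicalSpace X
  polish : @PolishSpace X ts
  smul : Γ → X → X
  one_smul' : ∀ x, smul 1 x = x
  mul_smul' : ∀ γ δ x, smul (γ * δ) x = smul γ (smul δ x)
  cont : ∀ γ : Γ, @Continuous X X ts ts (smul γ)
  free : ∀ (γ : Γ) (x : X), smul γ x = x → γ = 1

/-- A free continuous action on a Polish space admits a Baire measurable `Ω`-coloring. -/
def FreePolishAction.HasBMCol [Group Γ] (α : FreePolishAction Γ) (Ω : Set (Γ → ℕ)) : Prop :=
  letI := α.ts
  ∃ f : α.X → ℕ, BaireMFun f ∧ {x : α.X | (fun γ : Γ => f (α.smul γ x)) ∈ Ω} ∈ residual α.X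

/-- A free continuous action on a Polish space is generically smooth. -/
def FreePolishAction.IsGenSmooth [Group Γ] (α : FreePolishAction Γ) : Prop :=
  letI := α.ts
  ∃ f : α.X → ℝ, BaireMFun f ∧ ∀ x y : α.X, f x = f y ↔ ∃ γ : Γ, α.smul γ x = y

/-- A subshift is *hard* if every free continuous action of `Γ` on a Polish space that
admits a Baire measurable `Ω`-coloring is generically smooth. -/
def Hard (Γ : Type*) [Group Γ] (Ω : Set (Γ → ℕ)) : Prop :=
  ∀ α : FreePolishAction Γ, α.HasBMCol Ω → α.IsGenSmooth

/-- A subshift is *easy* if every free continuous action of `Γ` on a Polish space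
admits a Baire measurable `Ω`-coloring. -/
def Easy (Γ : Type*) [Group Γ] (Ω : Set (Γ → ℕ)) : Prop :=
  ∀ α : FreePolishAction Γ, α.HasBMCol Ω

/-- Finite partial colorings of `Γ`: partial maps `Γ ⇀ ℕ` with finite domain. -/
abbrev FPC (Γ : Type*) : Type _ := {φ : Γ → Option ℕ // {γ : Γ | φ γ ≠ none}.Finite}

/-- The domain of a finite partial coloring. -/
def domP (φ : FPC Γ) : Set Γ := {γ : Γ | φ.1 γ ≠ none}

/-- `Fin(Ω)`: the set of finite partial colorings extending to an element of `Ω`. -/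
def FinOf (Ω : Set (Γ → ℕ)) : Set (FPC Γ) :=
  {φ | ∃ ω ∈ Ω, ∀ (γ : Γ) (c : ℕ), φ.1 γ = some c → ω γ = c}

/-- `g : FPC Γ → Bool` codes (the set `Fin(Ω)` of) the subshift `Ω`. -/
def CodesSubshift [Group Γ] (g : FPC Γ → Bool) (Ω : Set (Γ → ℕ)) : Prop :=
  IsSubshift Ω ∧ ∀ φ : FPC Γ, g φ = true ↔ φ ∈ FinOf Ω

/-- The shift action of `Γ` on finite partial colorings: `(γ · φ)(δ) = φ(δγ)`. -/
def shiftP [Group Γ] (γ : Γ) (φ : FPC Γ) : FPC Γ :=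
  ⟨fun δ => φ.1 (δ * γ), by
    apply (φ.2.image fun δ => δ * γ⁻¹).subset
    intro δ hδ
    exact ⟨δ * γ, hδ, by simp⟩⟩

/-- The empty partial coloring. -/
def emptyP (Γ : Type*) : FPC Γ := ⟨fun _ => none, by simp⟩

/-- The union (join) of two partial colorings (values of `φ` take precedence). -/
def joinP (φ ψ : FPC Γ) : FPC Γ :=
  ⟨fun δ => match φ.1 δ with | some c => some c | none => ψ.1 δ, by
    apply (φ.2.union ψ.2).subset
    intro δ hδ
    by_cases h : φ.1 δ = none
    · right
      simp only [mem_setOf_eq, h] at hδ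
      exact hδ
    · exact Or.inl h⟩

/-- The union of a finite list of partial colorings. -/
def joinList (l : List (FPC Γ)) : FPC Γ := l.foldr joinP (emptyP Γ)

/-- `φ[γ, r]`: the restriction of `φ` to the closed ball `B(γ, r)`. -/
noncomputable def restrictBall [MetricSpace Γ] (φ : FPC Γ) (γ : Γ) (r : ℝ) : FPC Γ :=
  ⟨fun δ => if dist γ δ ≤ r then φ.1 δ else none, by
    apply φ.2.subset
    intro δ hδ
    by_cases h : dist γ δ ≤ r
    · simp only [mem_setOf_eq, if_pos h] at hδ
      exact hδ
    · simp only [mem_setOf_eq, if_neg h] at hδ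
      exact absurd rfl hδ⟩

/-- `φ ∪ {(γ, c)}`. -/
def insertP [DecidableEq Γ] (φ : FPC Γ) (γ : Γ) (c : ℕ) : FPC Γ :=
  ⟨fun δ => if δ = γ then some c else φ.1 δ, by
    apply (φ.2.insert γ).subset
    intro δ hδ
    by_cases h : δ = γ
    · exact Or.inl h
    · right
      simp only [mem_setOf_eq, if_neg h] at hδ
      exact hδ⟩

/-- The restriction of a total coloring `ω` to a finite set `S`. -/
def restrictTo [DecidableEq Γ] (ω : Γ → ℕ) (S : Finset Γ) : FPC Γ :=
  ⟨fun δ => if δ ∈ S then some (ω δ) else none, by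
    apply S.finite_toSet.subset
    intro δ hδ
    by_cases h : δ ∈ S
    · exact h
    · simp only [mem_setOf_eq, if_neg h] at hδ
      exact absurd rfl hδ⟩

/-- Post-composition of a partial coloring with `ρ : ℕ → ℕ`. -/
def mapP (ρ : ℕ → ℕ) (φ : FPC Γ) : FPC Γ :=
  ⟨fun δ => (φ.1 δ).map ρ, by
    apply φ.2.subset
    intro δ hδ
    intro h
    simp only [mem_setOf_eq, h] at hδ
    exact hδ rfl⟩

/-- `ψ` is a restriction of `φ`. -/
def IsRestrictionOf (ψ φ : FPC Γ) : Prop := ∀ δ : Γ, ψ.1 δ = none ∨ ψ.1 δ = φ.1 δ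

/-- A `Γ`-ideal: a shift-invariant set of finite partial colorings closed under
restrictions. -/
def IsGammaIdeal [Group Γ] (P : Set (FPC Γ)) : Prop :=
  (∀ (γ : Γ), ∀ φ ∈ P, shiftP γ φ ∈ P) ∧
  (∀ φ ∈ P, ∀ ψ : FPC Γ, IsRestrictionOf ψ φ → ψ ∈ P)

/-- An extendable `Γ`-ideal. -/
def IsExtendable [DecidableEq Γ] (P : Set (FPC Γ)) : Prop :=
  ∀ φ ∈ P, ∀ γ : Γ, φ.1 γ = none → ∃ c : ℕ, insertP φ γ c ∈ P

/-- `φ` and `ψ` are `R`-separated: `dist(dom φ, dom ψ) > R φ + R ψ`. -/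
def RSeparated [MetricSpace Γ] (R : FPC Γ → ℝ) (φ ψ : FPC Γ) : Prop :=
  ∀ γ ∈ domP φ, ∀ δ ∈ domP ψ, R φ + R ψ < dist γ δ

/-- The join property of a `Γ`-ideal `P`. -/
def HasJoinProperty [Group Γ] [MetricSpace Γ] (P : Set (FPC Γ)) : Prop :=
  ∃ R : FPC Γ → ℝ, (∀ φ, 0 ≤ R φ) ∧ (∀ (γ : Γ), ∀ φ ∈ P, R (shiftP γ φ) = R φ) ∧
    ∀ l : List (FPC Γ), (∀ φ ∈ l, φ ∈ P) → l.Pairwise (RSeparated R) → joinList l ∈ P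

/-- `P^loc_r`: partial colorings that are `r`-locally in `P`. -/
def LocallyIn [MetricSpace Γ] (P : Set (FPC Γ)) (r : ℕ → ℝ) : Set (FPC Γ) :=
  {φ | ∀ (γ : Γ) (c : ℕ), φ.1 γ = some c → restrictBall φ γ (r c) ∈ P}

/-- A local `Γ`-ideal. -/
def IsLocal [MetricSpace Γ] (P : Set (FPC Γ)) : Prop :=
  ∃ r : ℕ → ℝ, (∀ c, 0 ≤ r c) ∧ P = LocallyIn P r

/-- `Col(P)`: colorings all of whose finite restrictions lie in `P`. -/
def ColOf [DecidableEq Γ] (P : Set (FPC Γ)) : Set (Γ → ℕ) :=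
  {ω | ∀ S : Finset Γ, restrictTo ω S ∈ P}

/-! ### The space of Baire measurable functions -/

/-- Baire measurable functions from `X` to `Y`. -/
abbrev BMFunSub (X Y : Type*) [TopologicalSpace X] [MeasurableSpace Y] :=
  {f : X → Y // BaireMFun f}

/-- Equality on a comeager set. -/
def BFunRel {X Y : Type*} [TopologicalSpace X] [MeasurableSpace Y]
    (f g : BMFunSub X Y) : Prop := {x : X | f.1 x = g.1 x} ∈ residual X

/-- `B(X,Y)`: Baire measurable functions modulo equality on a comeager set. -/
abbrev BFun (X Y : Type*) [TopologicalSpace X] [MeasurableSpace Y] :=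
  Quot (BFunRel (X := X) (Y := Y))

/-- `[U, A]`: the classes of functions `f` with `U ∖ f⁻¹(A)` meager. -/
def forceSet {X Y : Type*} [TopologicalSpace X] [MeasurableSpace Y]
    (U : Set X) (A : Set Y) : Set (BFun X Y) :=
  {F | ∃ f : BMFunSub X Y, Quot.mk BFunRel f = F ∧ IsMeagre (U \ f.1 ⁻¹' A)}

/-- `Σ(X,Y)`: the σ-algebra generated by the sets `[U, A]` for `U` nonempty open
and `A` Borel. -/
def SigmaXY (X Y : Type*) [TopologicalSpace X] [MeasurableSpace Y] :
    MeasurableSpace (BFun X Y) :=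
  MeasurableSpace.generateFrom
    {S | ∃ (U : Set X) (A : Set Y), IsOpen U ∧ U.Nonempty ∧ MeasurableSet A ∧ S = forceSet U A}

/-! ### Auxiliary development for `stmt15` -/

section Stmt15Aux

set_option linter.unusedSectionVars false
set_option maxHeartbeats 1000000

variable {Γ : Type*} [Group Γ] [DecidableEq Γ] [MetricSpace Γ]

theorem FPC.ext' {φ ψ : FPC Γ} (h : ∀ δ, φ.1 δ = ψ.1 δ) : φ = ψ :=
  Subtype.ext (funext h)

@[simp] theorem shiftP_apply (γ : Γ) (φ : FPC Γ) (δ : Γ) :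
    (shiftP γ φ).1 δ = φ.1 (δ * γ) := rfl

theorem shiftP_shiftP (a b : Γ) (φ : FPC Γ) : shiftP a (shiftP b φ) = shiftP (a * b) φ :=
  FPC.ext' fun δ => by simp [mul_assoc]

theorem shiftP_one (φ : FPC Γ) : shiftP (1 : Γ) φ = φ := FPC.ext' fun δ => by simp

theorem shiftP_inv_left (γ : Γ) (φ : FPC Γ) : shiftP γ⁻¹ (shiftP γ φ) = φ := by
  rw [shiftP_shiftP, inv_mul_cancel, shiftP_one]

theorem shiftP_inv_right (γ : Γ) (φ : FPC Γ) : shiftP γ (shiftP γ⁻¹ φ) = φ := by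
  rw [shiftP_shiftP, mul_inv_cancel, shiftP_one]

theorem restr_refl (φ : FPC Γ) : IsRestrictionOf φ φ := fun _ => Or.inr rfl

theorem restr_trans {φ ψ χ : FPC Γ} (h1 : IsRestrictionOf φ ψ) (h2 : IsRestrictionOf ψ χ) :
    IsRestrictionOf φ χ := fun δ => by
  rcases h1 δ with h | h
  · exact Or.inl h
  · rcases h2 δ with h' | h'
    · exact Or.inl (h.trans h')
    · exact Or.inr (h.trans h')

theorem restr_eq {φ ψ : FPC Γ} (h : IsRestrictionOf φ ψ) {δ : Γ} (hδ : φ.1 δ ≠ none) :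
    φ.1 δ = ψ.1 δ := (h δ).resolve_left hδ

theorem restr_shift {φ ψ : FPC Γ} (g : Γ) (h : IsRestrictionOf φ ψ) :
    IsRestrictionOf (shiftP g φ) (shiftP g ψ) := fun δ => h (δ * g)

theorem restr_domP {φ ψ : FPC Γ} (h : IsRestrictionOf φ ψ) : domP φ ⊆ domP ψ := by
  intro δ hδ
  have hne : φ.1 δ ≠ none := hδ
  have h2 := restr_eq h hne
  show ψ.1 δ ≠ none
  rw [← h2]; exact hne

theorem restr_ext {φ₁ φ₂ ψ : FPC Γ} (h1 : IsRestrictionOf φ₁ ψ) (h2 : IsRestrictionOf φ₂ ψ)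
    (hd : domP φ₁ = domP φ₂) : φ₁ = φ₂ := by
  apply FPC.ext'
  intro δ
  by_cases hδ : φ₁.1 δ = none
  · have hδ2 : φ₂.1 δ = none := by
      by_contra hne
      have hmem : δ ∈ domP φ₁ := by rw [hd]; exact hne
      exact hmem hδ
    rw [hδ, hδ2]
  · have hδ2 : φ₂.1 δ ≠ none := by
      have hmem : δ ∈ domP φ₂ := by rw [← hd]; exact hδ
      exact hmem
    rw [restr_eq h1 hδ, restr_eq h2 hδ2]

theorem finite_restr (ψ : FPC Γ) : {φ : FPC Γ | IsRestrictionOf φ ψ}.Finite := by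
  apply Set.Finite.of_finite_image (f := domP)
  · apply (ψ.2.finite_subsets).subset
    rintro S ⟨φ, hφ, rfl⟩
    exact restr_domP hφ
  · intro a ha b hb hd
    exact restr_ext ha hb hd

theorem restr_lt_ncard {φ ψ : FPC Γ} (h : IsRestrictionOf φ ψ) (hne : φ ≠ ψ) :
    (domP φ).ncard < (domP ψ).ncard := by
  apply Set.ncard_lt_ncard _ ψ.2
  constructor
  · exact restr_domP h
  · intro hsub
    apply hne
    apply FPC.ext'
    intro δ
    rcases h δ with h' | h'
    · by_cases hδ : ψ.1 δ = none
      · rw [h', hδ]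
      · have hmem : δ ∈ domP φ := hsub hδ
        exact absurd h' hmem
    · exact h'

theorem joinP_apply_none {φ ψ : FPC Γ} {δ : Γ} (h : φ.1 δ = none) :
    (joinP φ ψ).1 δ = ψ.1 δ := by
  show (match φ.1 δ with | some c => some c | none => ψ.1 δ) = ψ.1 δ
  rw [h]

theorem joinP_apply_some {φ ψ : FPC Γ} {δ : Γ} {c : ℕ} (h : φ.1 δ = some c) :
    (joinP φ ψ).1 δ = some c := by
  show (match φ.1 δ with | some c => some c | none => ψ.1 δ) = some c
  rw [h]

theorem joinList_cons (x : FPC Γ) (xs : List (FPC Γ)) :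
    joinList (x :: xs) = joinP x (joinList xs) := rfl

theorem joinList_eq_none {l : List (FPC Γ)} {δ : Γ} :
    (joinList l).1 δ = none ↔ ∀ ψ ∈ l, ψ.1 δ = none := by
  induction l with
  | nil => simp [joinList, emptyP]
  | cons x xs ih =>
    rw [joinList_cons]
    cases h : x.1 δ with
    | none =>
      rw [joinP_apply_none h]
      simp only [List.mem_cons]
      constructor
      · intro hj ψ hψ
        rcases hψ with rfl | hψ
        · exact h
        · exact ih.mp hj ψ hψ
      · intro hall
        exact ih.mpr fun ψ hψ => hall ψ (Or.inr hψ)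
    | some c =>
      rw [joinP_apply_some h]
      simp only [List.mem_cons]
      constructor
      · intro hj; cases hj
      · intro hall
        have h2 := hall x (Or.inl rfl)
        rw [h] at h2; cases h2

theorem joinList_eq_some {l : List (FPC Γ)} {δ : Γ} {c : ℕ}
    (h : (joinList l).1 δ = some c) : ∃ ψ ∈ l, ψ.1 δ = some c := by
  induction l with
  | nil => simp [joinList, emptyP] at h
  | cons x xs ih =>
    rw [joinList_cons] at h
    cases hx : x.1 δ with
    | none =>
      rw [joinP_apply_none hx] at h
      obtain ⟨ψ, h1, h2⟩ := ih h
      exact ⟨ψ, List.mem_cons_of_mem _ h1, h2⟩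
    | some c' =>
      rw [joinP_apply_some hx] at h
      exact ⟨x, List.mem_cons_self, by rw [hx, h]⟩

theorem joinList_mem_eq {l : List (FPC Γ)}
    (hcomp : ∀ ψ₁ ∈ l, ∀ ψ₂ ∈ l, ∀ (δ : Γ) (c₁ c₂ : ℕ),
      ψ₁.1 δ = some c₁ → ψ₂.1 δ = some c₂ → c₁ = c₂)
    {ψ : FPC Γ} (hψ : ψ ∈ l) {δ : Γ} {c : ℕ} (h : ψ.1 δ = some c) :
    (joinList l).1 δ = some c := by
  cases hj : (joinList l).1 δ with
  | none =>
    rw [joinList_eq_none.mp hj ψ hψ] at h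
    cases h
  | some c' =>
    obtain ⟨ψ', h1, h2⟩ := joinList_eq_some hj
    rw [hcomp ψ' h1 ψ hψ δ c' c h2 h]

theorem restr_joinList {l : List (FPC Γ)}
    (hcomp : ∀ ψ₁ ∈ l, ∀ ψ₂ ∈ l, ∀ (δ : Γ) (c₁ c₂ : ℕ),
      ψ₁.1 δ = some c₁ → ψ₂.1 δ = some c₂ → c₁ = c₂)
    {ψ : FPC Γ} (hψ : ψ ∈ l) : IsRestrictionOf ψ (joinList l) := by
  intro δ
  cases h : ψ.1 δ with
  | none => exact Or.inl rfl
  | some c => exact Or.inr (joinList_mem_eq hcomp hψ h).symm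

theorem joinList_eq_of {l : List (FPC Γ)} {χ : FPC Γ}
    (h1 : ∀ ψ ∈ l, IsRestrictionOf ψ χ)
    (h2 : ∀ δ : Γ, χ.1 δ ≠ none → ∃ ψ ∈ l, ψ.1 δ ≠ none) :
    joinList l = χ := by
  have hcomp : ∀ ψ₁ ∈ l, ∀ ψ₂ ∈ l, ∀ (δ : Γ) (c₁ c₂ : ℕ),
      ψ₁.1 δ = some c₁ → ψ₂.1 δ = some c₂ → c₁ = c₂ := by
    intro ψ₁ hm1 ψ₂ hm2 δ c₁ c₂ e1 e2
    have f1 : ψ₁.1 δ = χ.1 δ := restr_eq (h1 ψ₁ hm1) (by rw [e1]; exact Option.some_ne_none c₁)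
    have f2 : ψ₂.1 δ = χ.1 δ := restr_eq (h1 ψ₂ hm2) (by rw [e2]; exact Option.some_ne_none c₂)
    rw [e1] at f1; rw [e2] at f2
    rw [← f2] at f1
    exact Option.some_injective ℕ f1
  apply FPC.ext'
  intro δ
  cases hχ : χ.1 δ with
  | none =>
    rw [joinList_eq_none]
    intro ψ hm
    rcases h1 ψ hm δ with h | h
    · exact h
    · rw [h, hχ]
  | some c =>
    obtain ⟨ψ, hm, hn⟩ := h2 δ (by rw [hχ]; exact Option.some_ne_none c)
    have h3 := restr_eq (h1 ψ hm) hn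
    rw [hχ] at h3
    exact joinList_mem_eq hcomp hm h3

theorem FPC.countable_inst [Countable Γ] : Countable (FPC Γ) := by
  have hfin : ∀ φ : FPC Γ, {p : Γ × ℕ | φ.1 p.1 = some p.2}.Finite := by
    intro φ
    apply (φ.2.image fun γ => (γ, (φ.1 γ).getD 0)).subset
    rintro ⟨γ, c⟩ h
    simp only [Set.mem_setOf_eq] at h
    refine ⟨γ, ?_, ?_⟩
    · show φ.1 γ ≠ none
      rw [h]; exact Option.some_ne_none c
    · show (γ, (φ.1 γ).getD 0) = (γ, c)
      rw [h]
      rfl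
  classical
  set F : FPC Γ → Finset (Γ × ℕ) := fun φ => (hfin φ).toFinset with hF
  have hinj : Function.Injective F := by
    intro φ ψ h
    apply FPC.ext'
    intro δ
    have hmem : ∀ c : ℕ, φ.1 δ = some c ↔ ψ.1 δ = some c := by
      intro c
      constructor
      · intro hc
        have h2 : (δ, c) ∈ F φ := (Set.Finite.mem_toFinset (hfin φ)).mpr hc
        rw [h] at h2
        exact (Set.Finite.mem_toFinset (hfin ψ)).mp h2
      · intro hc
        have h2 : (δ, c) ∈ F ψ := (Set.Finite.mem_toFinset (hfin ψ)).mpr hc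
        rw [← h] at h2
        exact (Set.Finite.mem_toFinset (hfin φ)).mp h2
    cases hφ : φ.1 δ with
    | none =>
      cases hψ : ψ.1 δ with
      | none => rfl
      | some c =>
        have h2 := (hmem c).mpr hψ
        rw [hφ] at h2; cases h2
    | some c => exact ((hmem c).mp hφ).symm
  exact hinj.countable

theorem restrictBall_apply_le {φ : FPC Γ} {γ δ : Γ} {r : ℝ} (h : dist γ δ ≤ r) :
    (restrictBall φ γ r).1 δ = φ.1 δ := if_pos h

theorem restrictBall_restr (φ : FPC Γ) (γ : Γ) (r : ℝ) :
    IsRestrictionOf (restrictBall φ γ r) φ := by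
  intro δ
  by_cases h : dist γ δ ≤ r
  · exact Or.inr (if_pos h)
  · exact Or.inl (if_neg h)

theorem insertP_apply (φ : FPC Γ) (γ : Γ) (c : ℕ) (δ : Γ) :
    (insertP φ γ c).1 δ = if δ = γ then some c else φ.1 δ := rfl

variable (E : ℕ → ℕ × FPC Γ) (P : Set (FPC Γ)) (R : FPC Γ → ℝ)

/-- The radius encoded in a color. -/
def kOf (n : ℕ) : ℕ := (E n).1

/-- The pattern encoded in a color. -/
def patOf (n : ℕ) : FPC Γ := (E n).2

/-- The decoding map: value of the encoded pattern at the identity. -/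
def rhoE (n : ℕ) : ℕ := ((patOf E n).1 1).getD 0

/-- The claimed pattern of a point `γ` with color `n`, positioned at `γ`. -/
def Cl (γ : Γ) (n : ℕ) : FPC Γ := shiftP γ⁻¹ (patOf E n)

theorem Cl_apply (γ : Γ) (n : ℕ) (δ : Γ) : (Cl E γ n).1 δ = (patOf E n).1 (δ * γ⁻¹) := rfl

theorem Cl_self (γ : Γ) (n : ℕ) : (Cl E γ n).1 γ = (patOf E n).1 1 := by
  rw [Cl_apply, mul_inv_cancel]

theorem Cl_shift (g q : Γ) (n : ℕ) : shiftP g (Cl E (q * g) n) = Cl E q n := by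
  unfold Cl
  rw [shiftP_shiftP]
  congr 1
  rw [mul_inv_rev, ← mul_assoc, mul_inv_cancel, one_mul]

/-- A color is valid if its pattern contains the identity, lies in the `k`-ball, and
all its restrictions belong to `P` with `R`-value at most `k`. -/
def ValidC (n : ℕ) : Prop :=
  (patOf E n).1 1 ≠ none ∧
  (∀ x : Γ, (patOf E n).1 x ≠ none → dist (1 : Γ) x ≤ kOf E n) ∧
  (∀ ψ : FPC Γ, IsRestrictionOf ψ (patOf E n) → ψ ∈ P ∧ R ψ ≤ kOf E n)

/-- The pattern claimed at `γ` is consistent with the actual (decoded) colors. -/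
def MatchC (φ : FPC Γ) (γ : Γ) (n : ℕ) : Prop :=
  ∀ (y : Γ) (m c : ℕ), φ.1 y = some m → (Cl E γ n).1 y = some c → rhoE E m = c

/-- The claimed patterns at `γ` and `p` are far apart. -/
def FarC (γ : Γ) (n : ℕ) (p : Γ) (m : ℕ) : Prop :=
  ∀ a b : Γ, (Cl E γ n).1 a ≠ none → (Cl E p m).1 b ≠ none →
    (kOf E n : ℝ) + kOf E m < dist a b

/-- Trichotomy: nearby smaller patterns are nested with, or far from, the pattern at `γ`. -/
def TriC (φ : FPC Γ) (γ : Γ) (n : ℕ) : Prop :=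
  ∀ (p : Γ) (m : ℕ), φ.1 p = some m → kOf E m ≤ kOf E n →
    dist γ p ≤ 4 * kOf E n →
    IsRestrictionOf (Cl E p m) (Cl E γ n) ∨ IsRestrictionOf (Cl E γ n) (Cl E p m) ∨
      FarC E γ n p m

/-- The local ideal. -/
def PLoc : Set (FPC Γ) :=
  {φ | ∀ (γ : Γ) (n : ℕ), φ.1 γ = some n → ValidC E P R n ∧ MatchC E φ γ n ∧ TriC E φ γ n}

theorem dist_of_Cl (hinv : ∀ γ δ g : Γ, dist (γ * g) (δ * g) = dist γ δ)
    {γ y : Γ} {n : ℕ} (hv : ValidC E P R n) (hy : (Cl E γ n).1 y ≠ none) :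
    dist γ y ≤ kOf E n := by
  have h := hv.2.1 (y * γ⁻¹) hy
  have h2 := hinv 1 (y * γ⁻¹) γ
  rw [one_mul, inv_mul_cancel_right] at h2
  rw [← h2] at h
  exact h

theorem PLoc_restr {φ ψ : FPC Γ} (hφ : φ ∈ PLoc E P R) (h : IsRestrictionOf ψ φ) :
    ψ ∈ PLoc E P R := by
  intro γ n hγ
  have hγ' : φ.1 γ = some n := by
    rw [← restr_eq h (by rw [hγ]; exact Option.some_ne_none n)]
    exact hγ
  obtain ⟨hv, hm, ht⟩ := hφ γ n hγ'
  refine ⟨hv, ?_, ?_⟩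
  · intro y m c hy hc
    refine hm y m c ?_ hc
    rw [← restr_eq h (by rw [hy]; exact Option.some_ne_none m)]
    exact hy
  · intro p m hp h1 h2
    refine ht p m ?_ h1 h2
    rw [← restr_eq h (by rw [hp]; exact Option.some_ne_none m)]
    exact hp

theorem PLoc_shiftinv (hinv : ∀ γ δ g : Γ, dist (γ * g) (δ * g) = dist γ δ)
    (g : Γ) {φ : FPC Γ} (hφ : φ ∈ PLoc E P R) : shiftP g φ ∈ PLoc E P R := by
  intro γ' n h
  have h' : φ.1 (γ' * g) = some n := h
  obtain ⟨hv, hm, ht⟩ := hφ (γ' * g) n h'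
  refine ⟨hv, ?_, ?_⟩
  · intro y m c hy hc
    have hc' : (Cl E (γ' * g) n).1 (y * g) = some c := by
      rw [← Cl_shift E g γ' n] at hc
      exact hc
    exact hm (y * g) m c hy hc'
  · intro p m hp h1 h2
    rw [← hinv γ' p g] at h2
    rcases ht (p * g) m hp h1 h2 with h3 | h3 | h3
    · left
      rw [← Cl_shift E g p m, ← Cl_shift E g γ' n]
      exact restr_shift g h3
    · right; left
      rw [← Cl_shift E g p m, ← Cl_shift E g γ' n]
      exact restr_shift g h3
    · right; right
      intro a b ha hb
      have ha' : (Cl E (γ' * g) n).1 (a * g) ≠ none := by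
        rw [← Cl_shift E g γ' n] at ha; exact ha
      have hb' : (Cl E (p * g) m).1 (b * g) ≠ none := by
        rw [← Cl_shift E g p m] at hb; exact hb
      have h4 := h3 (a * g) (b * g) ha' hb'
      rwa [hinv a b g] at h4

theorem PLoc_local (hinv : ∀ γ δ g : Γ, dist (γ * g) (δ * g) = dist γ δ) :
    PLoc E P R = LocallyIn (PLoc E P R) (fun n => 4 * kOf E n) := by
  apply Set.eq_of_subset_of_subset
  · intro φ hφ γ n hγ
    exact PLoc_restr E P R hφ (restrictBall_restr φ γ _)
  · intro φ hφ γ n hγ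
    have hk : (0 : ℝ) ≤ 4 * kOf E n := by positivity
    have h0 : (restrictBall φ γ (4 * kOf E n)).1 γ = some n := by
      rw [restrictBall_apply_le (by rw [dist_self]; exact hk)]
      exact hγ
    obtain ⟨hv, hm, ht⟩ := hφ γ n hγ γ n h0
    refine ⟨hv, ?_, ?_⟩
    · intro y m c hy hc
      have hdy : dist γ y ≤ kOf E n :=
        dist_of_Cl E P R hinv hv (by rw [hc]; exact Option.some_ne_none c)
      have hle : dist γ y ≤ 4 * kOf E n := by
        have h4 : (kOf E n : ℝ) ≤ 4 * kOf E n :=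
          le_mul_of_one_le_left (Nat.cast_nonneg _) (by norm_num)
        linarith
      refine hm y m c ?_ hc
      rw [restrictBall_apply_le hle]; exact hy
    · intro p m hp h1 h2
      refine ht p m ?_ h1 h2
      rw [restrictBall_apply_le h2]; exact hp

theorem far_pair_aux (hinv : ∀ γ δ g : Γ, dist (γ * g) (δ * g) = dist γ δ)
    {φ : FPC Γ} (hφ : φ ∈ PLoc E P R) {q q' : Γ} {m m' : ℕ}
    (hq : φ.1 q = some m) (hq' : φ.1 q' = some m')
    (hk : kOf E m' ≤ kOf E m)
    (hnr1 : ¬ IsRestrictionOf (Cl E q m) (Cl E q' m'))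
    (hnr2 : ¬ IsRestrictionOf (Cl E q' m') (Cl E q m)) :
    ∀ a b : Γ, (Cl E q m).1 a ≠ none → (Cl E q' m').1 b ≠ none →
      (kOf E m : ℝ) + kOf E m' < dist a b := by
  intro a b ha hb
  by_cases hd : dist q q' ≤ 4 * kOf E m
  · rcases (hφ q m hq).2.2 q' m' hq' hk hd with h | h | h
    · exact absurd h hnr2
    · exact absurd h hnr1
    · exact h a b ha hb
  · push_neg at hd
    have da : dist q a ≤ kOf E m := dist_of_Cl E P R hinv (hφ q m hq).1 ha
    have db : dist q' b ≤ kOf E m' := dist_of_Cl E P R hinv (hφ q' m' hq').1 hb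
    have htri : dist q q' ≤ dist q a + dist a b + dist b q' := dist_triangle4 q a b q'
    have hk' : (kOf E m' : ℝ) ≤ kOf E m := Nat.cast_le.mpr hk
    have hcomm : dist b q' = dist q' b := dist_comm b q'
    linarith

theorem far_pair (hinv : ∀ γ δ g : Γ, dist (γ * g) (δ * g) = dist γ δ)
    {φ : FPC Γ} (hφ : φ ∈ PLoc E P R) {q q' : Γ} {m m' : ℕ}
    (hq : φ.1 q = some m) (hq' : φ.1 q' = some m')
    (hnr1 : ¬ IsRestrictionOf (Cl E q m) (Cl E q' m'))
    (hnr2 : ¬ IsRestrictionOf (Cl E q' m') (Cl E q m)) :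
    ∀ a b : Γ, (Cl E q m).1 a ≠ none → (Cl E q' m').1 b ≠ none →
      (kOf E m : ℝ) + kOf E m' < dist a b := by
  rcases le_total (kOf E m') (kOf E m) with h | h
  · exact far_pair_aux E P R hinv hφ hq hq' h hnr1 hnr2
  · intro a b ha hb
    have h2 := far_pair_aux E P R hinv hφ hq' hq h hnr2 hnr1 b a hb ha
    rw [dist_comm] at h2
    linarith

/-- Restriction of a claimed pattern to the actual domain. -/
def pieceOf (φ Z : FPC Γ) : FPC Γ :=
  ⟨fun δ => if φ.1 δ = none then none else Z.1 δ, by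
    apply Z.2.subset
    intro δ h
    simp only [Set.mem_setOf_eq] at h ⊢
    by_cases hc : φ.1 δ = none
    · rw [if_pos hc] at h; exact absurd rfl h
    · rw [if_neg hc] at h; exact h⟩

theorem pieceOf_apply (φ Z : FPC Γ) (δ : Γ) :
    (pieceOf φ Z).1 δ = if φ.1 δ = none then none else Z.1 δ := rfl

theorem pieceOf_restr (φ Z : FPC Γ) : IsRestrictionOf (pieceOf φ Z) Z := by
  intro δ
  by_cases hc : φ.1 δ = none
  · left; exact if_pos hc
  · right; exact if_neg hc

theorem exists_max_claim {φ : FPC Γ} {X : FPC Γ}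
    (hX : ∃ p nn, φ.1 p = some nn ∧ X = Cl E p nn) :
    ∃ Z, (∃ p nn, φ.1 p = some nn ∧ Z = Cl E p nn) ∧ IsRestrictionOf X Z ∧
      ∀ Y, (∃ p nn, φ.1 p = some nn ∧ Y = Cl E p nn) → IsRestrictionOf Z Y → Z = Y := by
  classical
  have hSfin : {X : FPC Γ | ∃ p nn, φ.1 p = some nn ∧ X = Cl E p nn}.Finite := by
    apply (φ.2.image fun p => Cl E p ((φ.1 p).getD 0)).subset
    rintro Y ⟨p, nn, hp, rfl⟩
    refine ⟨p, ?_, ?_⟩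
    · show φ.1 p ≠ none; rw [hp]; exact Option.some_ne_none nn
    · show Cl E p ((φ.1 p).getD 0) = Cl E p nn
      rw [hp]
      rfl
  have hTfin : {Y : FPC Γ | (∃ p nn, φ.1 p = some nn ∧ Y = Cl E p nn) ∧
      IsRestrictionOf X Y}.Finite := hSfin.subset fun Y hY => hY.1
  have hTne : {Y : FPC Γ | (∃ p nn, φ.1 p = some nn ∧ Y = Cl E p nn) ∧
      IsRestrictionOf X Y}.Nonempty := ⟨X, hX, restr_refl X⟩
  obtain ⟨Z, hZT, hmax⟩ := Set.exists_max_image _ (fun Y => (domP Y).ncard) hTfin hTne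
  refine ⟨Z, hZT.1, hZT.2, ?_⟩
  intro Y hY hZY
  by_contra hne
  have hlt := restr_lt_ncard hZY hne
  have hYT : Y ∈ {Y : FPC Γ | (∃ p nn, φ.1 p = some nn ∧ Y = Cl E p nn) ∧
      IsRestrictionOf X Y} := ⟨hY, restr_trans hZT.2 hZY⟩
  have heq : (domP Y).ncard ≤ (domP Z).ncard := hmax Y hYT
  omega

theorem claim_P {φ : FPC Γ} (hφ : φ ∈ PLoc E P R) (hP : IsGammaIdeal P)
    (hRinv : ∀ (γ : Γ), ∀ χ ∈ P, R (shiftP γ χ) = R χ)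
    {q : Γ} {m : ℕ} (hq : φ.1 q = some m)
    {ψ : FPC Γ} (hψ : IsRestrictionOf ψ (Cl E q m)) :
    ψ ∈ P ∧ R ψ ≤ kOf E m := by
  have hv := (hφ q m hq).1
  have h2 : IsRestrictionOf (shiftP q ψ) (patOf E m) := by
    have h3 := restr_shift q hψ
    rwa [show shiftP q (Cl E q m) = patOf E m from by unfold Cl; rw [shiftP_inv_right]] at h3
  obtain ⟨hmem, hle⟩ := hv.2.2 _ h2
  have hψeq : ψ = shiftP q⁻¹ (shiftP q ψ) := (shiftP_inv_left q ψ).symm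
  constructor
  · rw [hψeq]; exact hP.1 q⁻¹ _ hmem
  · rw [hψeq, hRinv q⁻¹ _ hmem]; exact hle


theorem PLoc_reduce (hinv : ∀ γ δ g : Γ, dist (γ * g) (δ * g) = dist γ δ)
    (hP : IsGammaIdeal P)
    (hRinv : ∀ (γ : Γ), ∀ χ ∈ P, R (shiftP γ χ) = R χ)
    (hRjoin : ∀ l : List (FPC Γ), (∀ χ ∈ l, χ ∈ P) → l.Pairwise (RSeparated R) →
      joinList l ∈ P)
    {φ : FPC Γ} (hφ : φ ∈ PLoc E P R) : mapP (rhoE E) φ ∈ P := by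
  classical
  have hSfin : {X : FPC Γ | ∃ p nn, φ.1 p = some nn ∧ X = Cl E p nn}.Finite := by
    apply (φ.2.image fun p => Cl E p ((φ.1 p).getD 0)).subset
    rintro Y ⟨p, nn, hp, rfl⟩
    refine ⟨p, ?_, ?_⟩
    · show φ.1 p ≠ none; rw [hp]; exact Option.some_ne_none nn
    · show Cl E p ((φ.1 p).getD 0) = Cl E p nn
      rw [hp]; rfl
  have hMfin : {X : FPC Γ | (∃ p nn, φ.1 p = some nn ∧ X = Cl E p nn) ∧
      ∀ Y, (∃ p nn, φ.1 p = some nn ∧ Y = Cl E p nn) → IsRestrictionOf X Y → X = Y}.Finite :=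
    hSfin.subset fun X hX => hX.1
  set lM : List (FPC Γ) := hMfin.toFinset.toList with hlM
  have hmem_of : ∀ Z ∈ lM, (∃ p nn, φ.1 p = some nn ∧ Z = Cl E p nn) ∧
      ∀ Y, (∃ p nn, φ.1 p = some nn ∧ Y = Cl E p nn) → IsRestrictionOf Z Y → Z = Y := by
    intro Z hZ
    rw [hlM, Finset.mem_toList, Set.Finite.mem_toFinset] at hZ
    exact hZ
  have hfar : ∀ Z ∈ lM, ∀ Z' ∈ lM, Z ≠ Z' →
      ∀ q mm q' mm', φ.1 q = some mm → Z = Cl E q mm → φ.1 q' = some mm' →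
      Z' = Cl E q' mm' →
      ∀ a b : Γ, Z.1 a ≠ none → Z'.1 b ≠ none →
        (kOf E mm : ℝ) + kOf E mm' < dist a b := by
    intro Z hZ Z' hZ' hne q mm q' mm' hq hZeq hq' hZeq' a b ha hb
    subst hZeq; subst hZeq'
    refine far_pair E P R hinv hφ hq hq' ?_ ?_ a b ha hb
    · intro hr
      exact hne ((hmem_of _ hZ).2 _ ⟨q', mm', hq', rfl⟩ hr)
    · intro hr
      exact hne ((hmem_of _ hZ').2 _ ⟨q, mm, hq, rfl⟩ hr).symm
  set l : List (FPC Γ) := lM.map (pieceOf φ) with hl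
  have hlP : ∀ χ ∈ l, χ ∈ P := by
    intro χ hχ
    rw [hl, List.mem_map] at hχ
    obtain ⟨Z, hZl, rfl⟩ := hχ
    obtain ⟨q, mm, hq, hZeq⟩ := (hmem_of Z hZl).1
    refine (claim_P E P R hφ hP hRinv hq ?_).1
    rw [← hZeq]
    exact pieceOf_restr φ Z
  have hRle : ∀ Z ∈ lM, ∀ q mm, φ.1 q = some mm → Z = Cl E q mm →
      R (pieceOf φ Z) ≤ kOf E mm := by
    intro Z hZ q mm hq hZeq
    refine (claim_P E P R hφ hP hRinv hq ?_).2
    rw [← hZeq]; exact pieceOf_restr φ Z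
  have hdomp : ∀ Z : FPC Γ, ∀ a : Γ, (pieceOf φ Z).1 a ≠ none →
      Z.1 a ≠ none ∧ φ.1 a ≠ none := by
    intro Z a ha
    rw [pieceOf_apply] at ha
    by_cases hc : φ.1 a = none
    · rw [if_pos hc] at ha; exact absurd rfl ha
    · rw [if_neg hc] at ha; exact ⟨ha, hc⟩
  have hpair : l.Pairwise (RSeparated R) := by
    rw [hl, List.pairwise_map]
    refine List.Pairwise.imp_of_mem ?_ (Finset.nodup_toList _)
    intro Z Z' hZl hZl' hne
    obtain ⟨q, mm, hq, hZeq⟩ := (hmem_of Z hZl).1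
    obtain ⟨q', mm', hq', hZeq'⟩ := (hmem_of Z' hZl').1
    intro a ha b hb
    have haZ := (hdomp Z a ha).1
    have hbZ := (hdomp Z' b hb).1
    have hf := hfar Z hZl Z' hZl' hne q mm q' mm' hq hZeq hq' hZeq' a b haZ hbZ
    have h1 := hRle Z hZl q mm hq hZeq
    have h2 := hRle Z' hZl' q' mm' hq' hZeq'
    linarith
  have hcover : joinList l = mapP (rhoE E) φ := by
    apply joinList_eq_of
    · intro ψ hψ
      rw [hl, List.mem_map] at hψ
      obtain ⟨Z, hZl, rfl⟩ := hψ
      obtain ⟨q, mm, hq, hZeq⟩ := (hmem_of Z hZl).1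
      intro δ
      by_cases hc : φ.1 δ = none
      · left; rw [pieceOf_apply, if_pos hc]
      · cases hZδ : Z.1 δ with
        | none => left; rw [pieceOf_apply, if_neg hc, hZδ]
        | some c =>
          right
          rw [pieceOf_apply, if_neg hc, hZδ]
          obtain ⟨mδ, hmδ⟩ := Option.ne_none_iff_exists'.mp hc
          have hmatch := (hφ q mm hq).2.1 δ mδ c hmδ (by rw [← hZeq]; exact hZδ)
          show some c = (φ.1 δ).map (rhoE E)
          rw [hmδ, Option.map_some, hmatch]
    · intro δ hδ
      have hδ' : φ.1 δ ≠ none := by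
        intro hc
        apply hδ
        show (φ.1 δ).map (rhoE E) = none
        rw [hc]; rfl
      obtain ⟨nδ, hnδ⟩ := Option.ne_none_iff_exists'.mp hδ'
      obtain ⟨Z, hZS, hXZ, hZmax⟩ := exists_max_claim E (φ := φ) ⟨δ, nδ, hnδ, rfl⟩
      have hZlM : Z ∈ lM := by
        rw [hlM, Finset.mem_toList, Set.Finite.mem_toFinset]
        exact ⟨hZS, hZmax⟩
      refine ⟨pieceOf φ Z, ?_, ?_⟩
      · rw [hl, List.mem_map]; exact ⟨Z, hZlM, rfl⟩
      · rw [pieceOf_apply, if_neg hδ']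
        have hXδ : (Cl E δ nδ).1 δ ≠ none := by
          rw [Cl_self]
          exact (hφ δ nδ hnδ).1.1
        rw [← restr_eq hXZ hXδ]
        exact hXδ
  rw [← hcover]
  exact hRjoin l hlP hpair

theorem PLoc_extendable (hE : Function.Surjective E)
    (hinv : ∀ γ δ g : Γ, dist (γ * g) (δ * g) = dist γ δ)
    (hP : IsGammaIdeal P) (hextP : IsExtendable P)
    (hRinv : ∀ (γ : Γ), ∀ χ ∈ P, R (shiftP γ χ) = R χ)
    (hRjoin : ∀ l : List (FPC Γ), (∀ χ ∈ l, χ ∈ P) → l.Pairwise (RSeparated R) →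
      joinList l ∈ P) :
    IsExtendable (PLoc E P R) := by
  classical
  intro φ hφ γ hγ
  have hSfin : {X : FPC Γ | ∃ p nn, φ.1 p = some nn ∧ X = Cl E p nn}.Finite := by
    apply (φ.2.image fun p => Cl E p ((φ.1 p).getD 0)).subset
    rintro Y ⟨p, nn, hp, rfl⟩
    refine ⟨p, ?_, ?_⟩
    · show φ.1 p ≠ none; rw [hp]; exact Option.some_ne_none nn
    · show Cl E p ((φ.1 p).getD 0) = Cl E p nn
      rw [hp]; rfl
  have hMfin : {X : FPC Γ | (∃ p nn, φ.1 p = some nn ∧ X = Cl E p nn) ∧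
      ∀ Y, (∃ p nn, φ.1 p = some nn ∧ Y = Cl E p nn) → IsRestrictionOf X Y → X = Y}.Finite :=
    hSfin.subset fun X hX => hX.1
  set lM : List (FPC Γ) := hMfin.toFinset.toList with hlM
  have hmem_of : ∀ Z ∈ lM, (∃ p nn, φ.1 p = some nn ∧ Z = Cl E p nn) ∧
      ∀ Y, (∃ p nn, φ.1 p = some nn ∧ Y = Cl E p nn) → IsRestrictionOf Z Y → Z = Y := by
    intro Z hZ
    rw [hlM, Finset.mem_toList, Set.Finite.mem_toFinset] at hZ
    exact hZ
  have hfar : ∀ Z ∈ lM, ∀ Z' ∈ lM, Z ≠ Z' →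
      ∀ q mm q' mm', φ.1 q = some mm → Z = Cl E q mm → φ.1 q' = some mm' →
      Z' = Cl E q' mm' →
      ∀ a b : Γ, Z.1 a ≠ none → Z'.1 b ≠ none →
        (kOf E mm : ℝ) + kOf E mm' < dist a b := by
    intro Z hZ Z' hZ' hne q mm q' mm' hq hZeq hq' hZeq' a b ha hb
    subst hZeq; subst hZeq'
    refine far_pair E P R hinv hφ hq hq' ?_ ?_ a b ha hb
    · intro hr
      exact hne ((hmem_of _ hZ).2 _ ⟨q', mm', hq', rfl⟩ hr)
    · intro hr
      exact hne ((hmem_of _ hZ').2 _ ⟨q, mm, hq, rfl⟩ hr).symm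
  have hlMP : ∀ χ ∈ lM, χ ∈ P := by
    intro Z hZ
    obtain ⟨q, mm, hq, hZeq⟩ := (hmem_of Z hZ).1
    refine (claim_P E P R hφ hP hRinv hq ?_).1
    rw [← hZeq]; exact restr_refl Z
  have hRleZ : ∀ Z ∈ lM, ∀ q mm, φ.1 q = some mm → Z = Cl E q mm → R Z ≤ kOf E mm := by
    intro Z hZ q mm hq hZeq
    refine (claim_P E P R hφ hP hRinv hq ?_).2
    rw [← hZeq]; exact restr_refl Z
  have hpairZ : lM.Pairwise (RSeparated R) := by
    refine List.Pairwise.imp_of_mem ?_ (Finset.nodup_toList _)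
    intro Z Z' hZl hZl' hne
    obtain ⟨q, mm, hq, hZeq⟩ := (hmem_of Z hZl).1
    obtain ⟨q', mm', hq', hZeq'⟩ := (hmem_of Z' hZl').1
    intro a ha b hb
    have hf := hfar Z hZl Z' hZl' hne q mm q' mm' hq hZeq hq' hZeq' a b ha hb
    have h1 := hRleZ Z hZl q mm hq hZeq
    have h2 := hRleZ Z' hZl' q' mm' hq' hZeq'
    linarith
  have hJP : joinList lM ∈ P := hRjoin lM hlMP hpairZ
  have hcompat : ∀ ψ₁ ∈ lM, ∀ ψ₂ ∈ lM, ∀ (δ : Γ) (c₁ c₂ : ℕ),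
      ψ₁.1 δ = some c₁ → ψ₂.1 δ = some c₂ → c₁ = c₂ := by
    intro Z hZl Z' hZl' δ c₁ c₂ e1 e2
    by_cases hne : Z = Z'
    · subst hne
      rw [e1] at e2
      exact Option.some_injective ℕ e2
    · exfalso
      obtain ⟨q, mm, hq, hZeq⟩ := (hmem_of Z hZl).1
      obtain ⟨q', mm', hq', hZeq'⟩ := (hmem_of Z' hZl').1
      have hf := hfar Z hZl Z' hZl' hne q mm q' mm' hq hZeq hq' hZeq' δ δ
        (by rw [e1]; exact Option.some_ne_none c₁) (by rw [e2]; exact Option.some_ne_none c₂)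
      rw [dist_self] at hf
      have h0 : (0:ℝ) ≤ (kOf E mm : ℝ) + kOf E mm' := by positivity
      linarith
  have hZJ : ∀ Z ∈ lM, IsRestrictionOf Z (joinList lM) :=
    fun Z hZ => restr_joinList hcompat hZ
  have hagree : ∀ (y : Γ) (mm c : ℕ), φ.1 y = some mm → (joinList lM).1 y = some c →
      rhoE E mm = c := by
    intro y mm c hy hc
    obtain ⟨Z, hZl, hZy⟩ := joinList_eq_some hc
    obtain ⟨q, mq, hq, hZeq⟩ := (hmem_of Z hZl).1
    exact (hφ q mq hq).2.1 y mm c hy (by rw [← hZeq]; exact hZy)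
  have hOldJ : ∀ (p : Γ) (mm : ℕ), φ.1 p = some mm →
      IsRestrictionOf (Cl E p mm) (joinList lM) := by
    intro p mm hp
    obtain ⟨Z, hZS, hXZ, hZmax⟩ := exists_max_claim E (φ := φ) ⟨p, mm, hp, rfl⟩
    have hZlM : Z ∈ lM := by
      rw [hlM, Finset.mem_toList, Set.Finite.mem_toFinset]
      exact ⟨hZS, hZmax⟩
    exact restr_trans hXZ (hZJ Z hZlM)
  obtain ⟨K, hKP, hKoff, hKγ, hJK⟩ :
      ∃ K : FPC Γ, K ∈ P ∧ (∀ δ, δ ≠ γ → K.1 δ = (joinList lM).1 δ) ∧ K.1 γ ≠ none ∧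
        IsRestrictionOf (joinList lM) K := by
    cases hc : (joinList lM).1 γ with
    | some v =>
      exact ⟨joinList lM, hJP, fun δ _ => rfl,
        by rw [hc]; exact Option.some_ne_none v, restr_refl _⟩
    | none =>
      obtain ⟨c, hcP⟩ := hextP (joinList lM) hJP γ hc
      refine ⟨insertP (joinList lM) γ c, hcP, ?_, ?_, ?_⟩
      · intro δ hδ; rw [insertP_apply, if_neg hδ]
      · rw [insertP_apply, if_pos rfl]; exact Option.some_ne_none c
      · intro δ
        by_cases hδ : δ = γ
        · subst hδ; left; exact hc
        · right; rw [insertP_apply, if_neg hδ]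
  obtain ⟨cγ, hcγ⟩ := Option.ne_none_iff_exists'.mp hKγ
  have hπnP : shiftP γ K ∈ P := hP.1 γ K hKP
  have hDfin : ((fun y => dist γ y) '' {δ : Γ | K.1 δ ≠ none}).Finite := K.2.image _
  have hRfin : (R '' {ψ : FPC Γ | IsRestrictionOf ψ (shiftP γ K)}).Finite :=
    (finite_restr (shiftP γ K)).image _
  obtain ⟨b₁, hb₁⟩ := hDfin.bddAbove
  obtain ⟨b₂, hb₂⟩ := hRfin.bddAbove
  set kn : ℕ := ⌈max b₁ b₂⌉₊ with hkn
  have hmaxle : max b₁ b₂ ≤ (kn : ℝ) := Nat.le_ceil _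
  have hknD : ∀ y : Γ, K.1 y ≠ none → dist γ y ≤ (kn : ℝ) := by
    intro y hy
    have h1 : dist γ y ≤ b₁ := hb₁ ⟨y, hy, rfl⟩
    have h2 : b₁ ≤ max b₁ b₂ := le_max_left _ _
    linarith
  have hknR : ∀ ψ : FPC Γ, IsRestrictionOf ψ (shiftP γ K) → R ψ ≤ (kn : ℝ) := by
    intro ψ hψ
    have h1 : R ψ ≤ b₂ := hb₂ ⟨ψ, hψ, rfl⟩
    have h2 : b₂ ≤ max b₁ b₂ := le_max_right _ _
    linarith
  obtain ⟨n₀, hn₀⟩ := hE (kn, shiftP γ K)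
  have hk₀ : kOf E n₀ = kn := by rw [kOf, hn₀]
  have hp₀ : patOf E n₀ = shiftP γ K := by rw [patOf, hn₀]
  have hCl₀ : Cl E γ n₀ = K := by rw [Cl, hp₀, shiftP_inv_left]
  have hπn1 : (shiftP γ K).1 1 = some cγ := by
    show K.1 (1 * γ) = some cγ
    rw [one_mul]; exact hcγ
  have hrho₀ : rhoE E n₀ = cγ := by rw [rhoE, hp₀, hπn1]; rfl
  have hValid₀ : ValidC E P R n₀ := by
    refine ⟨?_, ?_, ?_⟩
    · rw [hp₀, hπn1]; exact Option.some_ne_none cγ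
    · intro x hx
      rw [hp₀] at hx
      have hx' : K.1 (x * γ) ≠ none := hx
      have h3 := hknD (x * γ) hx'
      have h2 := hinv 1 x γ
      rw [one_mul] at h2
      rw [hk₀, ← h2]
      exact h3
    · intro ψ hψ
      rw [hp₀] at hψ
      refine ⟨hP.2 _ hπnP ψ hψ, ?_⟩
      rw [hk₀]
      exact hknR ψ hψ
  have hKagree : ∀ (y : Γ) (mm c : ℕ), φ.1 y = some mm → K.1 y = some c →
      rhoE E mm = c := by
    intro y mm c hy hc
    have hyγ : y ≠ γ := by
      rintro rfl
      rw [hy] at hγ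
      cases hγ
    rw [hKoff y hyγ] at hc
    exact hagree y mm c hy hc
  have hOldK : ∀ (p : Γ) (mm : ℕ), φ.1 p = some mm → IsRestrictionOf (Cl E p mm) K :=
    fun p mm hp => restr_trans (hOldJ p mm hp) hJK
  refine ⟨n₀, ?_⟩
  intro δ nn hδ
  rw [insertP_apply] at hδ
  by_cases hδγ : δ = γ
  · subst hδγ
    rw [if_pos rfl] at hδ
    have hnn : nn = n₀ := (Option.some_injective ℕ hδ).symm
    subst hnn
    refine ⟨hValid₀, ?_, ?_⟩
    · intro y mm c hy hc
      rw [hCl₀] at hc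
      rw [insertP_apply] at hy
      by_cases hyγ : y = δ
      · subst hyγ
        rw [if_pos rfl] at hy
        have hmm : mm = nn := (Option.some_injective ℕ hy).symm
        subst hmm
        rw [hcγ] at hc
        have hceq : cγ = c := Option.some_injective ℕ hc
        rw [hrho₀, hceq]
      · rw [if_neg hyγ] at hy
        exact hKagree y mm c hy hc
    · intro p mm hp hk1 hk2
      rw [insertP_apply] at hp
      by_cases hpγ : p = δ
      · subst hpγ
        rw [if_pos rfl] at hp
        have hmm : mm = nn := (Option.some_injective ℕ hp).symm
        subst hmm
        exact Or.inl (restr_refl _)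
      · rw [if_neg hpγ] at hp
        left
        rw [hCl₀]
        exact hOldK p mm hp
  · rw [if_neg hδγ] at hδ
    obtain ⟨hv, hm, ht⟩ := hφ δ nn hδ
    refine ⟨hv, ?_, ?_⟩
    · intro y mm c hy hc
      rw [insertP_apply] at hy
      by_cases hyγ : y = γ
      · subst hyγ
        rw [if_pos rfl] at hy
        have hmm : mm = n₀ := (Option.some_injective ℕ hy).symm
        subst hmm
        have h1 : (Cl E δ nn).1 y = K.1 y :=
          restr_eq (hOldK δ nn hδ) (by rw [hc]; exact Option.some_ne_none c)
        rw [hc, hcγ] at h1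
        have hceq : c = cγ := Option.some_injective ℕ h1
        rw [hrho₀, hceq]
      · rw [if_neg hyγ] at hy
        exact hm y mm c hy hc
    · intro p mm hp hk1 hk2
      rw [insertP_apply] at hp
      by_cases hpγ : p = γ
      · subst hpγ
        rw [if_pos rfl] at hp
        have hmm : mm = n₀ := (Option.some_injective ℕ hp).symm
        subst hmm
        right; left
        rw [hCl₀]
        exact hOldK δ nn hδ
      · rw [if_neg hpγ] at hp
        exact ht p mm hp hk1 hk2

end Stmt15Aux


/-- Every extendable `Γ`-ideal with the join property is reducible to a local extendable
`Γ`-ideal. -/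
theorem stmt15 {Γ : Type*} [Group Γ] [Countable Γ] [Infinite Γ] [DecidableEq Γ]
    [MetricSpace Γ]
    (hinv : ∀ γ δ g : Γ, dist (γ * g) (δ * g) = dist γ δ)
    (hproper : ∀ (γ : Γ) (r : ℝ), (Metric.closedBall γ r).Finite)
    (P : Set (FPC Γ)) (hP : IsGammaIdeal P) (hext : IsExtendable P)
    (hjoin : HasJoinProperty P) :
    ∃ (P' : Set (FPC Γ)) (ρ : ℕ → ℕ), IsGammaIdeal P' ∧ IsExtendable P' ∧ IsLocal P' ∧
      ∀ φ ∈ P', mapP ρ φ ∈ P := by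
  classical
  obtain ⟨R, hR0, hRinv, hRjoin⟩ := hjoin
  haveI : Countable (FPC Γ) := FPC.countable_inst
  haveI : Nonempty (ℕ × FPC Γ) := ⟨(0, emptyP Γ)⟩
  obtain ⟨E, hE⟩ := exists_surjective_nat (ℕ × FPC Γ)
  refine ⟨PLoc E P R, rhoE E,
    ⟨fun g χ hχ => PLoc_shiftinv E P R hinv g hχ,
      fun χ hχ ψ hψ => PLoc_restr E P R hχ hψ⟩,
    PLoc_extendable E P R hE hinv hP hext hRinv hRjoin,
    ⟨fun n => 4 * kOf E n, fun n => by positivity, PLoc_local E P R hinv⟩,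
    fun χ hχ => PLoc_reduce E P R hinv hP hRinv hRjoin hχ⟩

end DescColor
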